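/- For all differentiable vector fields X, Y, Z, W on ℂ^m one has L_{X∘Y}(∘)(Z,W) = X ∘ (L_Y(∘)(Z,W)) + Y ∘ (L_X(∘)(Z,W)); that is, the truncated-polynomial multiplication on ℂ^m satisfies the Hertling–Manin integrability condition L_{X∘Y}(∘) = X∘L_Y(∘) + Y∘L_X(∘) of the definition of an F-manifold. -/

import Mathlib

open scoped BigOperators

noncomputable section

/-- The truncated-polynomial multiplication on `ℂ^m ≅ ℂ[X]/(X^m)`:
`(u ∘ v)_k = Σ_{i+j=k} u_i v_j`. -/
def tmul {m : ℕ} (u v : Fin m → ℂ) : Fin m → ℂ :=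
  fun k => ∑ i : Fin m, ∑ j : Fin m,
    if (i : ℕ) + (j : ℕ) = (k : ℕ) then u i * v j else 0

/-- The `i`-th standard basis vector of `ℂ^m` (zero if `i ≥ m`); `std 0` is the unit `e`. -/
def std {m : ℕ} (i : ℕ) : Fin m → ℂ := fun j => if (j : ℕ) = i then 1 else 0

/-- Lie bracket of vector fields on `ℂ^m`: `[X,Y](p) = DY(p)(X(p)) − DX(p)(Y(p))`. -/
def bracket {m : ℕ} (X Y : (Fin m → ℂ) → Fin m → ℂ) : (Fin m → ℂ) → Fin m → ℂ :=
  fun p => fderiv ℂ Y p (X p) - fderiv ℂ X p (Y p)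

/-- Pointwise truncated product of vector fields. -/
def pmul {m : ℕ} (X Y : (Fin m → ℂ) → Fin m → ℂ) : (Fin m → ℂ) → Fin m → ℂ :=
  fun p => tmul (X p) (Y p)

/-- Lie derivative of the multiplication `∘` along `X`:
`L_X(∘)(Y,Z) = [X, Y∘Z] − [X,Y]∘Z − Y∘[X,Z]`. -/
def lieD {m : ℕ} (X Y Z : (Fin m → ℂ) → Fin m → ℂ) : (Fin m → ℂ) → Fin m → ℂ :=
  fun p => bracket X (pmul Y Z) p - tmul (bracket X Y p) (Z p) - tmul (Y p) (bracket X Z p)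

/-- The Euler field `E(t) = (t_0 + a, t_1 + 1, t_2, …, t_{m−1})`. -/
def Efield {m : ℕ} (a : ℂ) : (Fin m → ℂ) → Fin m → ℂ :=
  fun p => p + a • std 0 + std 1

namespace TPAux
variable {m : ℕ}

/-- The polynomial `∑ u_i X^i` associated with `u ∈ ℂ^m`. -/
def pol (u : Fin m → ℂ) : Polynomial ℂ :=
  ∑ i : Fin m, Polynomial.C (u i) * Polynomial.X ^ (i : ℕ)

lemma pol_coeff (u : Fin m → ℂ) (n : ℕ) :
    (pol u).coeff n = if h : n < m then u ⟨n, h⟩ else 0 := by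
  rw [pol, Polynomial.finset_sum_coeff]
  simp only [Polynomial.coeff_C_mul, Polynomial.coeff_X_pow, mul_ite, mul_one, mul_zero]
  by_cases h : n < m
  · rw [dif_pos h, Finset.sum_eq_single (⟨n, h⟩ : Fin m)]
    · rw [if_pos rfl]
    · intro b _ hb
      rw [if_neg]
      intro hnb
      exact hb (Fin.ext hnb.symm)
    · intro hm; exact absurd (Finset.mem_univ _) hm
  · rw [dif_neg h]
    refine Finset.sum_eq_zero fun i _ => ?_
    rw [if_neg]
    intro hni
    exact h (hni ▸ i.isLt)

lemma tmul_eq_coeff (u v : Fin m → ℂ) (k : Fin m) :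
    tmul u v k = (pol u * pol v).coeff (k : ℕ) := by
  rw [tmul, pol, pol, Finset.sum_mul_sum, Polynomial.finset_sum_coeff]
  refine Finset.sum_congr rfl fun i _ => ?_
  rw [Polynomial.finset_sum_coeff]
  refine Finset.sum_congr rfl fun j _ => ?_
  rw [mul_mul_mul_comm, ← Polynomial.C_mul, ← pow_add, Polynomial.coeff_C_mul,
    Polynomial.coeff_X_pow]
  by_cases h : (i : ℕ) + (j : ℕ) = (k : ℕ)
  · rw [if_pos h, if_pos h.symm, mul_one]
  · rw [if_neg h, if_neg fun hh => h hh.symm, mul_zero]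

lemma tmul_comm (u v : Fin m → ℂ) : tmul u v = tmul v u := by
  funext k; rw [tmul_eq_coeff, tmul_eq_coeff, mul_comm]

lemma tmul_assoc (u v w : Fin m → ℂ) : tmul (tmul u v) w = tmul u (tmul v w) := by
  funext k
  rw [tmul_eq_coeff, tmul_eq_coeff, Polynomial.coeff_mul, Polynomial.coeff_mul]
  have h1 : ∀ x ∈ Finset.HasAntidiagonal.antidiagonal (k : ℕ),
      (pol (tmul u v)).coeff x.1 * (pol w).coeff x.2
        = (pol u * pol v).coeff x.1 * (pol w).coeff x.2 := by
    intro x hx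
    have hx' := Finset.HasAntidiagonal.mem_antidiagonal.mp hx
    have hx1 : x.1 < m := by have := k.isLt; omega
    rw [pol_coeff, dif_pos hx1, tmul_eq_coeff]
  have h2 : ∀ x ∈ Finset.HasAntidiagonal.antidiagonal (k : ℕ),
      (pol u).coeff x.1 * (pol (tmul v w)).coeff x.2
        = (pol u).coeff x.1 * (pol v * pol w).coeff x.2 := by
    intro x hx
    have hx' := Finset.HasAntidiagonal.mem_antidiagonal.mp hx
    have hx2 : x.2 < m := by have := k.isLt; omega
    rw [pol_coeff (tmul v w), dif_pos hx2, tmul_eq_coeff]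
  rw [Finset.sum_congr rfl h1, Finset.sum_congr rfl h2, ← Polynomial.coeff_mul,
    ← Polynomial.coeff_mul, mul_assoc]

lemma tmul_left_comm (u v w : Fin m → ℂ) : tmul u (tmul v w) = tmul v (tmul u w) := by
  rw [← tmul_assoc, tmul_comm u v, tmul_assoc]

lemma pol_add (u v : Fin m → ℂ) : pol (u + v) = pol u + pol v := by
  simp only [pol, Pi.add_apply, map_add, add_mul, Finset.sum_add_distrib]

lemma pol_smul (c : ℂ) (u : Fin m → ℂ) : pol (c • u) = c • pol u := by
  simp only [pol, Pi.smul_apply, smul_eq_mul, map_mul, Finset.smul_sum,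
    Polynomial.smul_eq_C_mul, mul_assoc]

lemma tmul_add_left (u u' v : Fin m → ℂ) : tmul (u + u') v = tmul u v + tmul u' v := by
  funext k
  simp only [Pi.add_apply, tmul_eq_coeff, pol_add, add_mul, Polynomial.coeff_add]

lemma tmul_add_right (u v v' : Fin m → ℂ) : tmul u (v + v') = tmul u v + tmul u v' := by
  funext k
  simp only [Pi.add_apply, tmul_eq_coeff, pol_add, mul_add, Polynomial.coeff_add]

lemma tmul_smul_left (c : ℂ) (u v : Fin m → ℂ) : tmul (c • u) v = c • tmul u v := by
  funext k
  simp only [Pi.smul_apply, tmul_eq_coeff, pol_smul, smul_mul_assoc, Polynomial.coeff_smul]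

lemma tmul_smul_right (c : ℂ) (u v : Fin m → ℂ) : tmul u (c • v) = c • tmul u v := by
  funext k
  simp only [Pi.smul_apply, tmul_eq_coeff, pol_smul, mul_smul_comm, Polynomial.coeff_smul]

/-- `tmul` as a bilinear map. -/
def tmulL : (Fin m → ℂ) →ₗ[ℂ] (Fin m → ℂ) →ₗ[ℂ] (Fin m → ℂ) :=
  LinearMap.mk₂ ℂ tmul tmul_add_left tmul_smul_left tmul_add_right tmul_smul_right

/-- `tmul` as a continuous bilinear map. -/
def tmulCLM : (Fin m → ℂ) →L[ℂ] (Fin m → ℂ) →L[ℂ] (Fin m → ℂ) :=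
  LinearMap.toContinuousLinearMap
    { toFun := fun u => LinearMap.toContinuousLinearMap (tmulL u)
      map_add' := fun u v => by ext w; simp [tmulL, tmul_add_left]
      map_smul' := fun c u => by ext w; simp [tmulL, tmul_smul_left] }

lemma tmulCLM_apply (u v : Fin m → ℂ) : tmulCLM u v = tmul u v := by
  simp [tmulCLM, tmulL]

lemma tmul_sub_left (u u' v : Fin m → ℂ) : tmul (u - u') v = tmul u v - tmul u' v :=
  map_sub (tmulL.flip v) u u'

lemma tmul_sub_right (u v v' : Fin m → ℂ) : tmul u (v - v') = tmul u v - tmul u v' :=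
  map_sub (tmulL u) v v'

lemma hasFDerivAt_pmul (X Y : (Fin m → ℂ) → Fin m → ℂ)
    (hX : Differentiable ℂ X) (hY : Differentiable ℂ Y) (p : Fin m → ℂ) :
    HasFDerivAt (pmul X Y)
      ((tmulCLM (X p)).comp (fderiv ℂ Y p)
        + (tmulCLM.comp (fderiv ℂ X p)).flip (Y p)) p := by
  have hc : HasFDerivAt (fun q => tmulCLM (X q)) (tmulCLM.comp (fderiv ℂ X p)) p :=
    tmulCLM.hasFDerivAt.comp p (hX p).hasFDerivAt
  have h := hc.clm_apply (hY p).hasFDerivAt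
  have heq : pmul X Y = fun q => tmulCLM (X q) (Y q) := by
    funext q; rw [pmul, tmulCLM_apply]
  rw [heq]
  exact h

lemma fderiv_pmul_apply (X Y : (Fin m → ℂ) → Fin m → ℂ)
    (hX : Differentiable ℂ X) (hY : Differentiable ℂ Y) (p v : Fin m → ℂ) :
    fderiv ℂ (pmul X Y) p v
      = tmul (X p) (fderiv ℂ Y p v) + tmul (fderiv ℂ X p v) (Y p) := by
  rw [(hasFDerivAt_pmul X Y hX hY p).fderiv]
  simp [tmulCLM_apply]

end TPAux

/-- The truncated-polynomial multiplication on `ℂ^m` satisfies the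
Hertling–Manin integrability condition: for all differentiable vector fields `X, Y, Z, W`,
`L_{X∘Y}(∘)(Z,W) = X ∘ (L_Y(∘)(Z,W)) + Y ∘ (L_X(∘)(Z,W))`. -/
theorem stmt1 {m : ℕ} (hm : 1 ≤ m)
    (X Y Z W : (Fin m → ℂ) → Fin m → ℂ)
    (hX : Differentiable ℂ X) (hY : Differentiable ℂ Y)
    (hZ : Differentiable ℂ Z) (hW : Differentiable ℂ W) :
    lieD (pmul X Y) Z W = fun p => pmul X (lieD Y Z W) p + pmul Y (lieD X Z W) p := by
  funext p
  have hZW := TPAux.fderiv_pmul_apply Z W hZ hW p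
  have hXY := TPAux.fderiv_pmul_apply X Y hX hY p
  simp only [lieD, bracket, pmul]
  simp only [hZW, hXY]
  simp only [TPAux.tmul_sub_left, TPAux.tmul_sub_right,
    TPAux.tmul_add_left, TPAux.tmul_add_right]
  simp only [TPAux.tmul_assoc, TPAux.tmul_comm, TPAux.tmul_left_comm]
  abel
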